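/- Let Ω ⊆ ℝⁿ be open, u ∈ C¹(Ω, ℝᴺ), Ω' compactly contained in Ω, and A : ℝⁿ → ℝᴺ an affine map. If for every λ > 0 one has ‖Du‖_{L^∞(Ω')} ≤ ‖Du + λ DA‖_{L^∞(Ω')}, then max_{z ∈ closure(Ω')} { Du(z) : DA } ≥ 0, where ':' denotes the Frobenius inner product on N×n matrices. -/

import Mathlib

open scoped BigOperators

/-- The gradient matrix `Du(x) ∈ ℝ^{N×n}` of `u : ℝⁿ → ℝᴺ`. -/
noncomputable def gradm {n N : ℕ} (u : (Fin n → ℝ) → (Fin N → ℝ)) (x : Fin n → ℝ) :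
    Matrix (Fin N) (Fin n) ℝ :=
  fun α i => fderiv ℝ u x (Pi.single i 1) α

/-- The Frobenius (Euclidean) norm of an `N×n` matrix. -/
noncomputable def mnorm {n N : ℕ} (M : Matrix (Fin N) (Fin n) ℝ) : ℝ :=
  Real.sqrt (∑ α, ∑ i, (M α i) ^ 2)

/-- The Frobenius inner product `M : P` of two `N×n` matrices. -/
def finner {n N : ℕ} (M P : Matrix (Fin N) (Fin n) ℝ) : ℝ :=
  ∑ α, ∑ i, M α i * P α i

lemma mnorm_nonneg {n N : ℕ} (M : Matrix (Fin N) (Fin n) ℝ) : 0 ≤ mnorm M :=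
  Real.sqrt_nonneg _

lemma sq_mnorm {n N : ℕ} (M : Matrix (Fin N) (Fin n) ℝ) :
    (mnorm M) ^ 2 = ∑ α, ∑ i, (M α i) ^ 2 := by
  rw [mnorm, Real.sq_sqrt]
  positivity

lemma expand_sq {n N : ℕ} (M P : Matrix (Fin N) (Fin n) ℝ) (lam : ℝ) :
    (mnorm (M + lam • P)) ^ 2
      = (mnorm M) ^ 2 + 2 * lam * finner M P + lam ^ 2 * ∑ α, ∑ i, (P α i) ^ 2 := by
  rw [sq_mnorm, sq_mnorm, finner]
  simp only [Matrix.add_apply, Matrix.smul_apply, smul_eq_mul, Finset.mul_sum,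
    ← Finset.sum_add_distrib]
  congr 1; ext α; congr 1; ext i; ring

/-- Lemma 3.1(a): if `‖Du‖_{L^∞(Ω')} ≤ ‖Du + λ DA‖_{L^∞(Ω')}` for all `λ > 0`,
then `max_{closure Ω'} { Du : DA } ≥ 0`. -/
theorem stmt0 {n N : ℕ} (Ω : Set (Fin n → ℝ)) (hΩ : IsOpen Ω)
    (u : (Fin n → ℝ) → (Fin N → ℝ)) (hu : ContDiffOn ℝ 1 u Ω)
    (Ω' : Set (Fin n → ℝ)) (hΩ' : IsOpen Ω') (hbd : Bornology.IsBounded Ω')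
    (hcl : closure Ω' ⊆ Ω)
    (DA : Matrix (Fin N) (Fin n) ℝ)
    (hvar : ∀ lam : ℝ, 0 < lam →
      sSup ((fun y => mnorm (gradm u y)) '' closure Ω') ≤
        sSup ((fun y => mnorm (gradm u y + lam • DA)) '' closure Ω')) :
    0 ≤ sSup ((fun z => finner (gradm u z) DA) '' closure Ω') := by
  set K := closure Ω' with hKdef
  rcases Set.eq_empty_or_nonempty K with hKe | hKne
  · simp [hKe, Real.sSup_empty]
  have hKc : IsCompact K :=
    Metric.isCompact_of_isClosed_isBounded isClosed_closure hbd.closure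
  -- continuity of the entries of gradm u on K
  have hfd : ContinuousOn (fderiv ℝ u) Ω :=
    hu.continuousOn_fderiv_of_isOpen hΩ le_rfl
  have hentry : ∀ (α : Fin N) (i : Fin n), ContinuousOn (fun y => gradm u y α i) K := by
    intro α i
    have h1 : ContinuousOn (fun y => fderiv ℝ u y (Pi.single i 1)) Ω :=
      hfd.clm_apply continuousOn_const
    have h2 : ContinuousOn (fun y => fderiv ℝ u y (Pi.single i 1) α) Ω :=
      (continuous_apply α).comp_continuousOn h1
    exact h2.mono hcl
  have hsumsq : ∀ (P : Matrix (Fin N) (Fin n) ℝ),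
      ContinuousOn (fun y => ∑ α, ∑ i, ((gradm u y + P) α i) ^ 2) K := by
    intro P
    apply continuousOn_finset_sum
    intro α _
    apply continuousOn_finset_sum
    intro i _
    simp only [Matrix.add_apply]
    exact ((hentry α i).add continuousOn_const).pow 2
  have hmn : ∀ (P : Matrix (Fin N) (Fin n) ℝ),
      ContinuousOn (fun y => mnorm (gradm u y + P)) K := fun P =>
    Real.continuous_sqrt.comp_continuousOn (hsumsq P)
  have hmn0 : ContinuousOn (fun y => mnorm (gradm u y)) K := by
    have := hmn 0
    simpa using this
  have hfin : ContinuousOn (fun z => finner (gradm u z) DA) K := by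
    apply continuousOn_finset_sum
    intro α _
    apply continuousOn_finset_sum
    intro i _
    exact (hentry α i).mul continuousOn_const
  set S := sSup ((fun z => finner (gradm u z) DA) '' K) with hS
  set M := sSup ((fun y => mnorm (gradm u y)) '' K) with hM
  set Q := ∑ α, ∑ i, (DA α i) ^ 2 with hQ
  have hQ0 : 0 ≤ Q := by positivity
  -- key inequality: for each λ > 0, -λ*Q/2 ≤ S
  have key : ∀ lam : ℝ, 0 < lam → -(lam * Q / 2) ≤ S := by
    intro lam hlam
    obtain ⟨z, hzK, hz⟩ :=
      hKc.exists_sSup_image_eq hKne (hmn (lam • DA))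
    have h1 : M ≤ mnorm (gradm u z + lam • DA) := by
      rw [← hz]; exact hvar lam hlam
    have hM0 : 0 ≤ M := by
      obtain ⟨x, hxK⟩ := hKne
      have := le_csSup (hKc.bddAbove_image hmn0) ⟨x, hxK, rfl⟩
      exact le_trans (mnorm_nonneg _) this
    have h2 : M ^ 2 ≤ (mnorm (gradm u z + lam • DA)) ^ 2 :=
      pow_le_pow_left₀ hM0 h1 2
    rw [expand_sq] at h2
    have h3 : mnorm (gradm u z) ≤ M :=
      le_csSup (hKc.bddAbove_image hmn0) ⟨z, hzK, rfl⟩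
    have h4 : (mnorm (gradm u z)) ^ 2 ≤ M ^ 2 :=
      pow_le_pow_left₀ (mnorm_nonneg _) h3 2
    have h5 : 0 ≤ 2 * lam * finner (gradm u z) DA + lam ^ 2 * Q := by nlinarith
    have h6 : finner (gradm u z) DA ≤ S :=
      le_csSup (hKc.bddAbove_image hfin) ⟨z, hzK, rfl⟩
    nlinarith
  -- conclude 0 ≤ S
  by_contra hneg
  push_neg at hneg
  have hlam : 0 < -S / (Q + 1) := by
    apply div_pos (by linarith) (by linarith)
  have := key (-S / (Q + 1)) hlam
  have hne : (Q + 1) ≠ 0 := by linarith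
  have heq : -(-S / (Q + 1) * Q / 2) = S * Q / (2 * (Q + 1)) := by
    field_simp
  rw [heq] at this
  have hpos : (0:ℝ) < 2 * (Q + 1) := by linarith
  have h2 : S * Q ≤ S * (2 * (Q + 1)) := by
    have := (div_le_iff₀ hpos).mp this
    linarith
  nlinarith [mul_neg_of_neg_of_pos hneg (show (0:ℝ) < Q + 2 by linarith)]
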